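/- If v ⋖ v(a,b) ⋖ v(a,b)(c,d) is a saturated chain of length two in the Bruhat order with a, b, c, d pairwise distinct positions, then v ⋖ v(c,d) ⋖ v(c,d)(a,b) is also a saturated chain in the Bruhat order (necessarily with the same endpoint, since disjoint transpositions commute). -/

import Mathlib

noncomputable section

/-- The length (number of inversions) of a finitely supported permutation of ℕ. -/
def len (w : Equiv.Perm ℕ) : ℕ := Set.ncard {p : ℕ × ℕ | p.1 < p.2 ∧ w p.2 < w p.1}

/-- `covTrans v a b` : the permutation `v·(a,b)` (swap the values in positions `a < b`,
positive integers) covers `v` in the Bruhat order, i.e. `ℓ(v·(a,b)) = ℓ(v) + 1`. -/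
def covTrans (v : Equiv.Perm ℕ) (a b : ℕ) : Prop :=
  0 < a ∧ a < b ∧ len (v * Equiv.swap a b) = len v + 1

namespace BruhatAux

def Inv (v : Equiv.Perm ℕ) : Set (ℕ × ℕ) := {p | p.1 < p.2 ∧ v p.2 < v p.1}

lemma len_eq (v : Equiv.Perm ℕ) : len v = (Inv v).ncard := rfl

def phi (a b : ℕ) (p : ℕ × ℕ) : ℕ × ℕ :=
  if Equiv.swap a b p.1 < Equiv.swap a b p.2 then (Equiv.swap a b p.1, Equiv.swap a b p.2)
  else (Equiv.swap a b p.2, Equiv.swap a b p.1)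

variable {a b : ℕ}

lemma swap_ne {p q : ℕ} (h : p ≠ q) : Equiv.swap a b p ≠ Equiv.swap a b q :=
  fun hh => h (Equiv.injective _ hh)

lemma phi_sorted {p : ℕ × ℕ} (h : p.1 < p.2) : (phi a b p).1 < (phi a b p).2 := by
  unfold phi
  have := swap_ne (a := a) (b := b) h.ne
  split <;> simp <;> omega

lemma phi_phi {p : ℕ × ℕ} (h : p.1 < p.2) : phi a b (phi a b p) = p := by
  unfold phi
  have := swap_ne (a := a) (b := b) h.ne
  split <;> simp_all <;> omega

lemma phi_mem_image {v : Equiv.Perm ℕ} {p : ℕ × ℕ} (h : p.1 < p.2) :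
    p ∈ phi a b '' Inv v ↔ phi a b p ∈ Inv v := by
  constructor
  · rintro ⟨q, hq, rfl⟩
    rwa [phi_phi hq.1]
  · intro hp
    exact ⟨phi a b p, hp, phi_phi h⟩

/-- pairs reversed by the swap -/
def R (a b : ℕ) : Set (ℕ × ℕ) := {p | p.1 < p.2 ∧ Equiv.swap a b p.2 < Equiv.swap a b p.1}

lemma key (v : Equiv.Perm ℕ) :
    Inv (v * Equiv.swap a b) = (phi a b '' Inv v \ R a b) ∪ (R a b \ phi a b '' Inv v) := by
  ext p
  by_cases hs : p.1 < p.2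
  · have hmem := phi_mem_image (v := v) (a := a) (b := b) hs
    have hne : v (Equiv.swap a b p.1) ≠ v (Equiv.swap a b p.2) :=
      fun hh => hs.ne (Equiv.injective _ (Equiv.injective _ hh))
    by_cases hr : Equiv.swap a b p.1 < Equiv.swap a b p.2
    · have hR : p ∉ R a b := fun hh => by have := hh.2; omega
      have heq : phi a b p = (Equiv.swap a b p.1, Equiv.swap a b p.2) := if_pos hr
      simp only [Set.mem_union, Set.mem_diff, hmem, heq]
      simp only [Inv, Set.mem_setOf_eq, Equiv.Perm.mul_apply]
      constructor
      · intro h; exact Or.inl ⟨⟨hr, h.2⟩, hR⟩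
      · rintro (⟨h, _⟩ | ⟨h, _⟩)
        · exact ⟨hs, h.2⟩
        · exact absurd h hR
    · have hlt : Equiv.swap a b p.2 < Equiv.swap a b p.1 := by
        have := swap_ne (a := a) (b := b) hs.ne; omega
      have hR : p ∈ R a b := ⟨hs, hlt⟩
      have heq : phi a b p = (Equiv.swap a b p.2, Equiv.swap a b p.1) := if_neg hr
      simp only [Set.mem_union, Set.mem_diff, hmem, heq]
      simp only [Inv, Set.mem_setOf_eq, Equiv.Perm.mul_apply]
      constructor
      · intro h
        refine Or.inr ⟨hR, fun hh => ?_⟩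
        have := hh.2; have := h.2; omega
      · rintro (⟨_, h⟩ | ⟨_, h⟩)
        · exact absurd hR h
        · refine ⟨hs, ?_⟩
          have : ¬ (v (Equiv.swap a b p.1) < v (Equiv.swap a b p.2)) := fun hh => h ⟨hlt, hh⟩
          omega
  · simp only [Inv, R, Set.mem_setOf_eq, Set.mem_union, Set.mem_diff, Set.mem_image]
    constructor
    · intro h; exact absurd h.1 hs
    · rintro (⟨⟨q, hq, rfl⟩, _⟩ | ⟨h, _⟩)
      · exact absurd (phi_sorted hq.1) hs
      · exact absurd h.1 hs


lemma R_mem (hab : a < b) {p : ℕ × ℕ} :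
    p ∈ R a b ↔ p = (a, b) ∨ (p.1 = a ∧ a < p.2 ∧ p.2 < b) ∨ (p.2 = b ∧ a < p.1 ∧ p.1 < b) := by
  obtain ⟨x, y⟩ := p
  simp only [R, Set.mem_setOf_eq, Equiv.swap_apply_def, Prod.mk.injEq]
  split_ifs <;> omega

def Rfin (a b : ℕ) : Finset (ℕ × ℕ) :=
  insert (a, b) (((Finset.Ioo a b).image fun k => (a, k)) ∪ ((Finset.Ioo a b).image fun k => (k, b)))

lemma R_eq (hab : a < b) : R a b = ↑(Rfin a b) := by
  ext ⟨x, y⟩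
  rw [R_mem hab]
  simp only [Rfin, Finset.coe_insert, Set.mem_insert_iff, Finset.coe_union, Set.mem_union,
    Finset.coe_image, Set.mem_image, Finset.mem_coe, Finset.mem_Ioo, Prod.mk.injEq]
  constructor
  · rintro (h | ⟨h1, h2, h3⟩ | ⟨h1, h2, h3⟩)
    · exact Or.inl h
    · exact Or.inr (Or.inl ⟨y, ⟨h2, h3⟩, h1.symm, rfl⟩)
    · exact Or.inr (Or.inr ⟨x, ⟨h2, h3⟩, rfl, h1.symm⟩)
  · rintro (h | ⟨k, hk, rfl, rfl⟩ | ⟨k, hk, rfl, rfl⟩)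
    · exact Or.inl h
    · exact Or.inr (Or.inl ⟨rfl, hk.1, hk.2⟩)
    · exact Or.inr (Or.inr ⟨rfl, hk.1, hk.2⟩)

lemma Rfin_card (hab : a < b) : (Rfin a b).card = 2 * (Finset.Ioo a b).card + 1 := by
  rw [Rfin, Finset.card_insert_of_notMem, Finset.card_union_of_disjoint,
    Finset.card_image_of_injective _ (fun x y h => by simpa using h),
    Finset.card_image_of_injective _ (fun x y h => by simpa using h)]
  · ring
  · simp only [Finset.disjoint_left, Finset.mem_image, Finset.mem_Ioo]
    rintro p ⟨k, hk, rfl⟩ ⟨k', hk', h⟩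
    simp only [Prod.mk.injEq] at h
    omega
  · simp only [Finset.mem_union, Finset.mem_image, Finset.mem_Ioo, Prod.mk.injEq, not_or]
    constructor <;> rintro ⟨k, hk, h1, h2⟩ <;> omega

lemma injOn_phi (s : Set (ℕ × ℕ)) (hs : ∀ p ∈ s, p.1 < p.2) : Set.InjOn (phi a b) s := by
  intro p hp q hq h
  have := phi_phi (a := a) (b := b) (hs p hp)
  have := phi_phi (a := a) (b := b) (hs q hq)
  calc p = phi a b (phi a b p) := (phi_phi (hs p hp)).symm
    _ = phi a b (phi a b q) := by rw [h]
    _ = q := phi_phi (hs q hq)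

lemma master (v : Equiv.Perm ℕ) (hab : a < b) (hfin : (Inv v).Finite) :
    len (v * Equiv.swap a b) + 2 * ((phi a b '' Inv v) ∩ R a b).ncard
      = len v + 2 * (Finset.Ioo a b).card + 1 := by
  set S := phi a b '' Inv v with hS
  have hSfin : S.Finite := hfin.image _
  have hRfin : (R a b).Finite := by rw [R_eq hab]; exact (Rfin a b).finite_toSet
  have hlen : len (v * Equiv.swap a b) = (S \ R a b).ncard + (R a b \ S).ncard := by
    rw [len_eq, key]
    exact Set.ncard_union_eq disjoint_sdiff_sdiff hSfin.diff hRfin.diff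
  have h1 : (S ∩ R a b).ncard + (S \ R a b).ncard = S.ncard :=
    Set.ncard_inter_add_ncard_diff_eq_ncard S (R a b) hSfin
  have h2 : (R a b ∩ S).ncard + (R a b \ S).ncard = (R a b).ncard :=
    Set.ncard_inter_add_ncard_diff_eq_ncard (R a b) S hRfin
  have h3 : S.ncard = len v := by
    rw [hS, len_eq]
    exact Set.ncard_image_of_injOn (injOn_phi _ fun p hp => hp.1)
  have h4 : (R a b).ncard = 2 * (Finset.Ioo a b).card + 1 := by
    rw [R_eq hab, Set.ncard_coe_finset, Rfin_card hab]
  rw [Set.inter_comm] at h2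
  omega


lemma phi_ab (hab : a < b) : phi a b (a, b) = (a, b) := by
  unfold phi
  rw [if_neg] <;> simp [Equiv.swap_apply_left, Equiv.swap_apply_right] <;> omega

lemma phi_ak {k : ℕ} (hab : a < b) (h1 : a < k) (h2 : k < b) : phi a b (a, k) = (k, b) := by
  unfold phi
  have hk : Equiv.swap a b k = k := Equiv.swap_apply_of_ne_of_ne (by omega) (by omega)
  rw [if_neg] <;> simp [Equiv.swap_apply_left, hk] <;> omega

lemma phi_kb {k : ℕ} (hab : a < b) (h1 : a < k) (h2 : k < b) : phi a b (k, b) = (a, k) := by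
  unfold phi
  have hk : Equiv.swap a b k = k := Equiv.swap_apply_of_ne_of_ne (by omega) (by omega)
  rw [if_neg] <;> simp [Equiv.swap_apply_right, hk] <;> omega

def T (v : Equiv.Perm ℕ) (a b : ℕ) : Finset (ℕ × ℕ) :=
  (if v b < v a then {(a, b)} else ∅)
    ∪ (((Finset.Ioo a b).filter fun k => v b < v k).image fun k => (a, k))
    ∪ (((Finset.Ioo a b).filter fun k => v k < v a).image fun k => (k, b))

lemma inter_eq_T (v : Equiv.Perm ℕ) (hab : a < b) :
    (phi a b '' Inv v) ∩ R a b = ↑(T v a b) := by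
  ext p
  have hmm : p ∈ (phi a b '' Inv v) ∩ R a b ↔ p ∈ R a b ∧ phi a b p ∈ Inv v := by
    constructor
    · rintro ⟨h1, h2⟩
      exact ⟨h2, (phi_mem_image h2.1).mp h1⟩
    · rintro ⟨h1, h2⟩
      exact ⟨(phi_mem_image h1.1).mpr h2, h1⟩
  rw [hmm, R_mem hab]
  simp only [T, Finset.coe_union, Set.mem_union, Finset.coe_image, Set.mem_image,
    Finset.mem_coe, Finset.mem_filter, Finset.mem_Ioo]
  constructor
  · rintro ⟨(rfl | ⟨h1, h2, h3⟩ | ⟨h1, h2, h3⟩), hp⟩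
    · rw [phi_ab hab] at hp
      left; left
      simp only [Inv, Set.mem_setOf_eq] at hp
      rw [if_pos hp.2]
      simp
    · obtain ⟨x, y⟩ := p
      simp only at h1 h2 h3
      subst h1
      rw [phi_ak hab h2 h3] at hp
      simp only [Inv, Set.mem_setOf_eq] at hp
      exact Or.inl (Or.inr ⟨y, ⟨⟨h2, h3⟩, hp.2⟩, rfl⟩)
    · obtain ⟨x, y⟩ := p
      simp only at h1 h2 h3
      subst h1
      rw [phi_kb hab h2 h3] at hp
      simp only [Inv, Set.mem_setOf_eq] at hp
      exact Or.inr ⟨x, ⟨⟨h2, h3⟩, hp.2⟩, rfl⟩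
  · rintro ((hp | ⟨k, ⟨hk, hv⟩, rfl⟩) | ⟨k, ⟨hk, hv⟩, rfl⟩)
    · split_ifs at hp with hvv
      · simp only [Finset.mem_singleton] at hp
        subst hp
        refine ⟨Or.inl rfl, ?_⟩
        rw [phi_ab hab]
        exact ⟨hab, hvv⟩
      · simp at hp
    · refine ⟨Or.inr (Or.inl ⟨rfl, hk.1, hk.2⟩), ?_⟩
      rw [phi_ak hab hk.1 hk.2]
      exact ⟨hk.2, hv⟩
    · refine ⟨Or.inr (Or.inr ⟨rfl, hk.1, hk.2⟩), ?_⟩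
      rw [phi_kb hab hk.1 hk.2]
      exact ⟨hk.1, hv⟩

lemma T_card (v : Equiv.Perm ℕ) (hab : a < b) :
    (T v a b).card = (if v b < v a then 1 else 0)
      + ((Finset.Ioo a b).filter fun k => v b < v k).card
      + ((Finset.Ioo a b).filter fun k => v k < v a).card := by
  rw [T, Finset.card_union_of_disjoint, Finset.card_union_of_disjoint,
    Finset.card_image_of_injective _ (fun x y h => by simpa using h),
    Finset.card_image_of_injective _ (fun x y h => by simpa using h)]
  · split_ifs <;> simp
  · simp only [Finset.disjoint_left, Finset.mem_image, Finset.mem_filter, Finset.mem_Ioo]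
    rintro p hp ⟨k, hk, h⟩
    split_ifs at hp with hvv
    · simp only [Finset.mem_singleton] at hp
      subst hp
      simp only [Prod.mk.injEq] at h
      omega
    · exact absurd hp (Finset.notMem_empty p)
  · simp only [Finset.disjoint_left, Finset.mem_union, Finset.mem_image, Finset.mem_filter,
      Finset.mem_Ioo]
    rintro p (hp | ⟨k, hk, rfl⟩) ⟨k', hk', h⟩
    · split_ifs at hp with hvv
      · simp only [Finset.mem_singleton] at hp
        subst hp
        simp only [Prod.mk.injEq] at h
        omega
      · exact absurd hp (Finset.notMem_empty p)
    · simp only [Prod.mk.injEq] at h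
      omega

lemma t_eq_iff (v : Equiv.Perm ℕ) (hab : a < b) :
    ((phi a b '' Inv v) ∩ R a b).ncard = (Finset.Ioo a b).card
      ↔ (v a < v b ∧ ∀ k, a < k → k < b → v k < v a ∨ v b < v k) := by
  rw [inter_eq_T v hab, Set.ncard_coe_finset, T_card v hab]
  set A := (Finset.Ioo a b).filter fun k => v b < v k with hA
  set B := (Finset.Ioo a b).filter fun k => v k < v a with hB
  have hvab : v a ≠ v b := fun h => hab.ne (v.injective h)
  rcases lt_or_gt_of_ne hvab with hv | hv
  · rw [if_neg (by omega)]
    have hdisj : Disjoint A B := by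
      simp only [Finset.disjoint_left, hA, hB, Finset.mem_filter]
      rintro k ⟨_, h1⟩ ⟨_, h2⟩
      omega
    have hsub : A ∪ B ⊆ Finset.Ioo a b := by
      simp only [Finset.union_subset_iff, hA, hB]
      exact ⟨Finset.filter_subset _ _, Finset.filter_subset _ _⟩
    have hu : (A ∪ B).card = A.card + B.card := Finset.card_union_of_disjoint hdisj
    constructor
    · intro h
      refine ⟨hv, fun k hk1 hk2 => ?_⟩
      have heq : A ∪ B = Finset.Ioo a b :=
        Finset.eq_of_subset_of_card_le hsub (by omega)
      have hm : k ∈ A ∪ B := by rw [heq]; exact Finset.mem_Ioo.mpr ⟨hk1, hk2⟩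
      simp only [Finset.mem_union, hA, hB, Finset.mem_filter] at hm
      rcases hm with ⟨_, h'⟩ | ⟨_, h'⟩
      · exact Or.inr h'
      · exact Or.inl h'
    · rintro ⟨_, h⟩
      have heq : A ∪ B = Finset.Ioo a b := by
        refine Finset.Subset.antisymm hsub fun k hk => ?_
        simp only [Finset.mem_Ioo] at hk
        simp only [Finset.mem_union, hA, hB, Finset.mem_filter, Finset.mem_Ioo]
        rcases h k hk.1 hk.2 with h' | h'
        · exact Or.inr ⟨⟨hk.1, hk.2⟩, h'⟩
        · exact Or.inl ⟨⟨hk.1, hk.2⟩, h'⟩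
      rw [heq] at hu
      omega
  · rw [if_pos hv]
    constructor
    · intro h
      exfalso
      have hsub : Finset.Ioo a b ⊆ A ∪ B := by
        intro k hk
        simp only [Finset.mem_Ioo] at hk
        have hka : v k ≠ v a := fun h => (by omega : k ≠ a) (v.injective h)
        have hkb : v k ≠ v b := fun h => (by omega : k ≠ b) (v.injective h)
        simp only [Finset.mem_union, hA, hB, Finset.mem_filter, Finset.mem_Ioo]
        rcases lt_or_gt_of_ne hka with h' | h'
        · exact Or.inr ⟨⟨hk.1, hk.2⟩, h'⟩
        · exact Or.inl ⟨⟨hk.1, hk.2⟩, by omega⟩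
      have := Finset.card_le_card hsub
      have := Finset.card_union_le A B
      omega
    · rintro ⟨h, _⟩
      omega


lemma R_finite (hab : a < b) : (R a b).Finite := by
  rw [R_eq hab]; exact (Rfin a b).finite_toSet

lemma fin_mul (v : Equiv.Perm ℕ) (hab : a < b) (hfin : (Inv v).Finite) :
    (Inv (v * Equiv.swap a b)).Finite := by
  rw [key]
  exact ((hfin.image _).diff).union ((R_finite hab).diff)

lemma fin_of_cov (v : Equiv.Perm ℕ) (hab : a < b)
    (hlen : len (v * Equiv.swap a b) = len v + 1) : (Inv v).Finite := by
  by_contra h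
  rw [← Set.not_infinite, not_not] at h
  have hS : (phi a b '' Inv v).Infinite := h.image (injOn_phi _ fun p hp => hp.1)
  have hinf : (Inv (v * Equiv.swap a b)).Infinite := by
    rw [key]
    exact (hS.diff (R_finite hab)).mono Set.subset_union_left
  rw [len_eq, len_eq, Set.Infinite.ncard hinf, Set.Infinite.ncard h] at hlen
  omega

lemma cov_iff (v : Equiv.Perm ℕ) (hab : a < b) (hfin : (Inv v).Finite) :
    len (v * Equiv.swap a b) = len v + 1
      ↔ (v a < v b ∧ ∀ k, a < k → k < b → v k < v a ∨ v b < v k) := by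
  have hm := master v hab hfin
  rw [← t_eq_iff v hab]
  omega

lemma swap_comm_disjoint {a b c d : ℕ} (h1 : a ≠ c) (h2 : a ≠ d) (h3 : b ≠ c) (h4 : b ≠ d) :
    Equiv.swap a b * Equiv.swap c d = Equiv.swap c d * Equiv.swap a b := by
  ext x
  simp only [Equiv.Perm.mul_apply, Equiv.swap_apply_def]
  split_ifs <;> omega

end BruhatAux


open BruhatAux in
/-- Commutation: if `v ⋖ v(a,b) ⋖ v(a,b)(c,d)` is a saturated chain in Bruhat order with
`a, b, c, d` pairwise distinct positions, then `v ⋖ v(c,d) ⋖ v(c,d)(a,b)` is also a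
saturated chain, with the same endpoint since disjoint transpositions commute. -/
theorem commutation_disjoint (v : Equiv.Perm ℕ) (a b c d : ℕ)
    (hdist : a ≠ b ∧ a ≠ c ∧ a ≠ d ∧ b ≠ c ∧ b ≠ d ∧ c ≠ d)
    (c1 : covTrans v a b) (c2 : covTrans (v * Equiv.swap a b) c d) :
    covTrans v c d ∧ covTrans (v * Equiv.swap c d) a b ∧
      v * Equiv.swap c d * Equiv.swap a b = v * Equiv.swap a b * Equiv.swap c d := by
  obtain ⟨hab, hac, had, hbc, hbd, hcd'⟩ := hdist
  obtain ⟨ha0, hab2, hlen1⟩ := c1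
  obtain ⟨hc0, hcd, hlen2⟩ := c2
  have hfinv : (Inv v).Finite := fin_of_cov v hab2 hlen1
  have hfinu : (Inv (v * Equiv.swap a b)).Finite := fin_mul v hab2 hfinv
  obtain ⟨hvab, hmid1⟩ := (cov_iff v hab2 hfinv).mp hlen1
  obtain ⟨hucd, hmid2⟩ := (cov_iff _ hcd hfinu).mp hlen2
  have hux : ∀ x, x ≠ a → x ≠ b → (v * Equiv.swap a b) x = v x := fun x h1 h2 => by
    rw [Equiv.Perm.mul_apply, Equiv.swap_apply_of_ne_of_ne h1 h2]
  have hua : (v * Equiv.swap a b) a = v b := by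
    rw [Equiv.Perm.mul_apply, Equiv.swap_apply_left]
  have hub : (v * Equiv.swap a b) b = v a := by
    rw [Equiv.Perm.mul_apply, Equiv.swap_apply_right]
  have huc : (v * Equiv.swap a b) c = v c := hux c (Ne.symm hac) (Ne.symm hbc)
  have hud : (v * Equiv.swap a b) d = v d := hux d (Ne.symm had) (Ne.symm hbd)
  rw [huc, hud] at hucd
  have inj : ∀ x y : ℕ, x ≠ y → v x ≠ v y := fun x y h hh => h (v.injective hh)
  have nab := inj a b hab
  have nac := inj a c hac
  have nad := inj a d had
  have nbc := inj b c hbc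
  have nbd := inj b d hbd
  have ncd := inj c d hcd'
  -- Claim 1 : middle condition for (c,d) w.r.t. v
  have hmidv : ∀ k, c < k → k < d → v k < v c ∨ v d < v k := by
    intro k hk1 hk2
    by_cases hka : k = a
    · rw [hka] at hk1 hk2 ⊢
      by_contra hcon
      push_neg at hcon
      obtain ⟨h1, h2⟩ := hcon
      have h2a := hmid2 a hk1 hk2
      rw [hua, huc, hud] at h2a
      have hdb : d < b := by
        rcases Nat.lt_or_ge b d with hbd' | hbd'
        · have h2b := hmid2 b (by omega) hbd'
          rw [hub, huc, hud] at h2b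
          omega
        · omega
      have h1d := hmid1 d (by omega) hdb
      omega
    · by_cases hkb : k = b
      · rw [hkb] at hk1 hk2 ⊢
        by_contra hcon
        push_neg at hcon
        obtain ⟨h1, h2⟩ := hcon
        have h2b := hmid2 b hk1 hk2
        rw [hub, huc, hud] at h2b
        have hac' : a < c := by
          rcases Nat.lt_or_ge c a with ha' | ha'
          · have h2a := hmid2 a ha' (by omega)
            rw [hua, huc, hud] at h2a
            omega
          · omega
        have h1c := hmid1 c hac' hk1
        omega
      · have h := hmid2 k hk1 hk2
        rw [hux k hka hkb, huc, hud] at h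
        exact h
  have hvcd : v c < v d := hucd
  -- values of v * swap c d
  have hwa : (v * Equiv.swap c d) a = v a := by
    rw [Equiv.Perm.mul_apply, Equiv.swap_apply_of_ne_of_ne hac had]
  have hwb : (v * Equiv.swap c d) b = v b := by
    rw [Equiv.Perm.mul_apply, Equiv.swap_apply_of_ne_of_ne hbc hbd]
  have hwc : (v * Equiv.swap c d) c = v d := by
    rw [Equiv.Perm.mul_apply, Equiv.swap_apply_left]
  have hwd : (v * Equiv.swap c d) d = v c := by
    rw [Equiv.Perm.mul_apply, Equiv.swap_apply_right]
  -- Claim 2 : middle condition for (a,b) w.r.t. v * swap c d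
  have hmidw : ∀ k, a < k → k < b →
      (v * Equiv.swap c d) k < v a ∨ v b < (v * Equiv.swap c d) k := by
    intro k hk1 hk2
    by_cases hkc : k = c
    · rw [hkc] at hk1 hk2 ⊢
      rw [hwc]
      by_contra hcon
      push_neg at hcon
      obtain ⟨h1, h2⟩ := hcon
      have h1c := hmid1 c hk1 hk2
      have hbd' : b < d := by
        rcases Nat.lt_or_ge d b with hd' | hd'
        · have h1d := hmid1 d (by omega) hd'
          omega
        · omega
      have h2b := hmid2 b hk2 hbd'
      rw [hub, huc, hud] at h2b
      omega
    · by_cases hkd : k = d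
      · rw [hkd] at hk1 hk2 ⊢
        rw [hwd]
        by_contra hcon
        push_neg at hcon
        obtain ⟨h1, h2⟩ := hcon
        have h1d := hmid1 d hk1 hk2
        have hca : c < a := by
          rcases Nat.lt_or_ge a c with hc' | hc'
          · have h1c := hmid1 c hc' (by omega)
            omega
          · omega
        have h2a := hmid2 a hca hk1
        rw [hua, huc, hud] at h2a
        omega
      · have hvk : (v * Equiv.swap c d) k = v k := by
          rw [Equiv.Perm.mul_apply, Equiv.swap_apply_of_ne_of_ne hkc hkd]
        rw [hvk]
        exact hmid1 k hk1 hk2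
  have hfinw : (Inv (v * Equiv.swap c d)).Finite := fin_mul v hcd hfinv
  refine ⟨⟨hc0, hcd, (cov_iff v hcd hfinv).mpr ⟨hvcd, hmidv⟩⟩,
    ⟨ha0, hab2, (cov_iff _ hab2 hfinw).mpr ⟨?_, ?_⟩⟩, ?_⟩
  · rw [hwa, hwb]; exact hvab
  · intro k hk1 hk2
    rw [hwa, hwb]
    exact hmidw k hk1 hk2
  · rw [mul_assoc, mul_assoc, swap_comm_disjoint hac had hbc hbd]

end
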